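/- For connected graphs G and H, rc(G □ H) ≤ min{rad(G) + rc(H), rad(H) + rc(G)}, where □ denotes the Cartesian product. -/

import Mathlib

open SimpleGraph

/-- The cop's sequence of positions, given his initial vertex `c₀` and a
(history-dependent) strategy `F`, where `F n` determines the cop's `(n+1)`-st
position from the robber's positions `r 0, …, r n` seen so far. -/
def copSeq {V : Type*} (c₀ : V) (F : (n : ℕ) → (Fin (n + 1) → V) → V)
    (r : ℕ → V) : ℕ → V
  | 0 => c₀
  | n + 1 => F n (fun i : Fin (n + 1) => r i)

/-- The cop has a winning strategy in the cop and robber game with radius of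
capture `k` on the graph `G`: the cop chooses a starting vertex and a strategy
such that, against every legal play of the robber (at each step the robber
stays or moves to an adjacent vertex; his moves may depend on the whole
history), the cop's play is legal and at some point of the game the distance
between the two players is at most `k`. -/
def CopWinRC {V : Type*} (G : SimpleGraph V) (k : ℕ) : Prop :=
  ∃ (c₀ : V) (F : (n : ℕ) → (Fin (n + 1) → V) → V),
    ∀ r : ℕ → V,
      (∀ i, r (i + 1) = r i ∨ G.Adj (r i) (r (i + 1))) →
      ((∀ n, copSeq c₀ F r (n + 1) = copSeq c₀ F r n
            ∨ G.Adj (copSeq c₀ F r n) (copSeq c₀ F r (n + 1))) ∧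
        ∃ n, G.dist (copSeq c₀ F r n) (r n) ≤ k
           ∨ G.dist (copSeq c₀ F r (n + 1)) (r n) ≤ k)

/-- The radius capture number of `G`: the least `k` such that the cop wins
the cop and robber game with radius of capture `k`. -/
noncomputable def rcNum {V : Type*} (G : SimpleGraph V) : ℕ :=
  sInf {k | CopWinRC G k}

/-- Eccentricity of a vertex: the maximum distance to another vertex. -/
noncomputable def graphEcc {V : Type*} (G : SimpleGraph V) (v : V) : ℕ :=
  sSup (Set.range (G.dist v))

/-- Radius of a graph: the minimum eccentricity. -/
noncomputable def graphRad {V : Type*} (G : SimpleGraph V) : ℕ :=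
  sInf (Set.range (graphEcc G))

section Aux
variable {V W : Type*} (G : SimpleGraph V) (H : SimpleGraph W)

lemma dist_boxProd_le (hG : G.Connected) (hH : H.Connected) (a c : V) (b d : W) :
    (G □ H).dist (a, b) (c, d) ≤ G.dist a c + H.dist b d := by
  obtain ⟨p, hp⟩ := hG.exists_walk_length_eq_dist a c
  obtain ⟨q, hq⟩ := hH.exists_walk_length_eq_dist b d
  have := SimpleGraph.dist_le ((p.boxProdLeft H b).append (q.boxProdRight G c))
  have h1 : (p.boxProdLeft H b).length = p.length := SimpleGraph.Walk.length_map _ _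
  have h2 : (q.boxProdRight G c).length = q.length := SimpleGraph.Walk.length_map _ _
  simpa [SimpleGraph.Walk.length_append, h1, h2, hp, hq] using this

lemma ecc_bound [Fintype V] (u x : V) : G.dist u x ≤ graphEcc G u :=
  le_csSup (Set.Finite.bddAbove (Set.finite_range _)) ⟨x, rfl⟩

lemma exists_center [Fintype V] (hne : Nonempty V) :
    ∃ u : V, graphEcc G u = graphRad G := by
  have : graphRad G ∈ Set.range (graphEcc G) :=
    Nat.sInf_mem (Set.range_nonempty_iff_nonempty.mpr hne)
  obtain ⟨u, hu⟩ := this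
  exact ⟨u, hu⟩

lemma copWin_boxProd_right [Fintype V] (hG : G.Connected) (hH : H.Connected)
    {k : ℕ} (hk : CopWinRC H k) : CopWinRC (G □ H) (graphRad G + k) := by
  obtain ⟨u, hu⟩ := exists_center G hG.nonempty
  obtain ⟨c₀, F, hF⟩ := hk
  refine ⟨(u, c₀), fun n rs => (u, F n (fun i => (rs i).2)), ?_⟩
  intro r hr
  set r2 : ℕ → W := fun m => (r m).2 with hr2
  have key : ∀ n, copSeq (u, c₀) (fun n rs => (u, F n (fun i => (rs i).2))) r n
      = (u, copSeq c₀ F r2 n) := by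
    intro n
    cases n with
    | zero => rfl
    | succ n => rfl
  have hr2legal : ∀ i, r2 (i + 1) = r2 i ∨ H.Adj (r2 i) (r2 (i + 1)) := by
    intro i
    rcases hr i with h | h
    · exact Or.inl (congrArg Prod.snd h)
    · rcases (SimpleGraph.boxProd_adj.mp h) with ⟨_, h2⟩ | ⟨h2, _⟩
      · exact Or.inl h2.symm
      · exact Or.inr h2
  obtain ⟨hmoves, n, hcap⟩ := hF r2 hr2legal
  constructor
  · intro m
    rw [key, key]
    rcases hmoves m with h | h
    · exact Or.inl (by rw [h])
    · exact Or.inr ((SimpleGraph.boxProd_adj_right).mpr h)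
  · refine ⟨n, ?_⟩
    have bound : ∀ m, (G □ H).dist (u, copSeq c₀ F r2 m) (r n)
        ≤ graphRad G + H.dist (copSeq c₀ F r2 m) (r2 n) := by
      intro m
      calc (G □ H).dist (u, copSeq c₀ F r2 m) (r n)
          = (G □ H).dist (u, copSeq c₀ F r2 m) ((r n).1, (r n).2) := rfl
        _ ≤ G.dist u (r n).1 + H.dist (copSeq c₀ F r2 m) (r2 n) :=
            dist_boxProd_le G H hG hH _ _ _ _
        _ ≤ graphRad G + H.dist (copSeq c₀ F r2 m) (r2 n) := by
            have := ecc_bound G u (r n).1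
            omega
    rcases hcap with h | h
    · exact Or.inl (by rw [key]; exact le_trans (bound n) (by omega))
    · exact Or.inr (by rw [key]; exact le_trans (bound (n+1)) (by omega))

lemma copWin_boxProd_left [Fintype W] (hG : G.Connected) (hH : H.Connected)
    {k : ℕ} (hk : CopWinRC G k) : CopWinRC (G □ H) (graphRad H + k) := by
  obtain ⟨u, hu⟩ := exists_center H hH.nonempty
  obtain ⟨c₀, F, hF⟩ := hk
  refine ⟨(c₀, u), fun n rs => (F n (fun i => (rs i).1), u), ?_⟩
  intro r hr
  set r1 : ℕ → V := fun m => (r m).1 with hr1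
  have key : ∀ n, copSeq (c₀, u) (fun n rs => (F n (fun i => (rs i).1), u)) r n
      = (copSeq c₀ F r1 n, u) := by
    intro n
    cases n with
    | zero => rfl
    | succ n => rfl
  have hr1legal : ∀ i, r1 (i + 1) = r1 i ∨ G.Adj (r1 i) (r1 (i + 1)) := by
    intro i
    rcases hr i with h | h
    · exact Or.inl (congrArg Prod.fst h)
    · rcases (SimpleGraph.boxProd_adj.mp h) with ⟨h2, _⟩ | ⟨_, h2⟩
      · exact Or.inr h2
      · exact Or.inl h2.symm
  obtain ⟨hmoves, n, hcap⟩ := hF r1 hr1legal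
  constructor
  · intro m
    rw [key, key]
    rcases hmoves m with h | h
    · exact Or.inl (by rw [h])
    · exact Or.inr ((SimpleGraph.boxProd_adj_left).mpr h)
  · refine ⟨n, ?_⟩
    have bound : ∀ m, (G □ H).dist (copSeq c₀ F r1 m, u) (r n)
        ≤ graphRad H + G.dist (copSeq c₀ F r1 m) (r1 n) := by
      intro m
      calc (G □ H).dist (copSeq c₀ F r1 m, u) (r n)
          = (G □ H).dist (copSeq c₀ F r1 m, u) ((r n).1, (r n).2) := rfl
        _ ≤ G.dist (copSeq c₀ F r1 m) (r1 n) + H.dist u (r n).2 :=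
            dist_boxProd_le G H hG hH _ _ _ _
        _ ≤ graphRad H + G.dist (copSeq c₀ F r1 m) (r1 n) := by
            have := ecc_bound H u (r n).2
            omega
    rcases hcap with h | h
    · exact Or.inl (by rw [key]; exact le_trans (bound n) (by omega))
    · exact Or.inr (by rw [key]; exact le_trans (bound (n+1)) (by omega))

lemma copWinRC_rcNum [Fintype V] (hG : G.Connected) : CopWinRC G (rcNum G) := by
  have hne : Nonempty V := hG.nonempty
  obtain ⟨v⟩ := hne
  have htriv : CopWinRC G (graphEcc G v) := by
    refine ⟨v, fun _ _ => v, fun r hr => ?_⟩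
    constructor
    · intro n; cases n <;> exact Or.inl rfl
    · exact ⟨0, Or.inl (ecc_bound G v (r 0))⟩
  exact Nat.sInf_mem (s := {k | CopWinRC G k}) ⟨_, htriv⟩

end Aux

/-- For connected graphs `G` and `H`,
`rc(G □ H) ≤ min (rad(G) + rc(H)) (rad(H) + rc(G))`. -/
theorem rcNum_boxProd_le {V W : Type*} [Fintype V] [Fintype W]
    (G : SimpleGraph V) (H : SimpleGraph W)
    (hG : G.Connected) (hH : H.Connected) :
    rcNum (G □ H) ≤ min (graphRad G + rcNum H) (graphRad H + rcNum G) := by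
  refine le_min (Nat.sInf_le ?_) (Nat.sInf_le ?_)
  · exact copWin_boxProd_right G H hG hH (copWinRC_rcNum H hH)
  · exact copWin_boxProd_left G H hG hH (copWinRC_rcNum G hG)
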